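/- Let r, p, q be positive integers with p and q dividing r and pq dividing 4r. Assume that q is even, and that if r/p is odd then r/q is even and 4r/(pq) is an odd integer. Then there exists a unique automorphism φ of G(r,p,q,4) such that φ(x) = x for all x ∈ N(r,p,q,4) and, for each i ∈ {1,2,3}: φ(s_i) = t_{i+2}·s_i if r/p is even, and φ(s_i) = t_{i+2}·s_i·c^{r/(2q)} if r/p is odd, where the indices of t are taken modulo 4 (so t₅ = t₁). -/

import Mathlib

open SemidirectProduct Multiplicative

/-- The action of `Equiv.Perm (Fin n)` on `(ℤ/rℤ)ⁿ` (written multiplicatively)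
by permuting coordinates: `(π • x) i = x (π⁻¹ i)`. -/
def permAct (r n : ℕ) : Equiv.Perm (Fin n) →* MulAut (Multiplicative (Fin n → ZMod r)) where
  toFun π := AddEquiv.toMultiplicative
    { Equiv.arrowCongr π (Equiv.refl (ZMod r)) with
      map_add' := fun _ _ => rfl }
  map_one' := by ext x; rfl
  map_mul' := by intro π σ; ext x; rfl

/-- The wreath product `G(r,n) = (ℤ/rℤ)ⁿ ⋊ Sₙ`. -/
abbrev GG (r n : ℕ) :=
  SemidirectProduct (Multiplicative (Fin n → ZMod r)) (Equiv.Perm (Fin n)) (permAct r n)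

/-- Summing the coordinates, as a homomorphism. -/
def sumHom (r n : ℕ) : Multiplicative (Fin n → ZMod r) →* Multiplicative (ZMod r) where
  toFun x := ofAdd (∑ i, toAdd x i)
  map_one' := by simp
  map_mul' x y := by
    simp [Finset.sum_add_distrib, ofAdd_add]

/-- `Δ : G(r,n) → ℤ/rℤ`, the sum of the "colors" of an element. -/
def DeltaHom (r n : ℕ) : GG r n →* Multiplicative (ZMod r) :=
  SemidirectProduct.lift (sumHom r n) 1 (by
    intro g
    refine MonoidHom.ext fun x => ?_
    show ofAdd (∑ i, toAdd x (g.symm i)) = _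
    rw [Equiv.sum_comp g.symm (toAdd x)]
    simp [sumHom])

/-- The subgroup `p·(ℤ/rℤ)` of `ℤ/rℤ` (written multiplicatively). -/
def pZ (r p : ℕ) : Subgroup (Multiplicative (ZMod r)) :=
  AddSubgroup.toSubgroup (AddSubgroup.zmultiples (p : ZMod r))

/-- The reflection group `G(r,p,n)` as a subgroup of `G(r,n)`. -/
def Grpn (r p n : ℕ) : Subgroup (GG r n) := (pZ r p).comap (DeltaHom r n)

/-- The scalar element `c = (1,(1,…,1))` of `G(r,n)`. -/
def cEl (r n : ℕ) : GG r n := inl (ofAdd fun _ => (1 : ZMod r))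

/-- The cyclic subgroup `C_q = ⟨c^{r/q}⟩` of `G(r,n)`. -/
def CsubQ (r q n : ℕ) : Subgroup (GG r n) := Subgroup.zpowers (cEl r n ^ (r / q))

/-- `C_q` viewed as a subgroup of `G(r,p,n)`. -/
def CsubIn (r p q n : ℕ) : Subgroup ↥(Grpn r p n) :=
  (CsubQ r q n).comap (Grpn r p n).subtype

lemma cEl_mem_center (r n : ℕ) : cEl r n ∈ Subgroup.center (GG r n) := by
  rw [Subgroup.mem_center_iff]
  intro g
  have h1 : (permAct r n g.right) (ofAdd fun _ => (1 : ZMod r)) =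
      ofAdd fun _ => (1 : ZMod r) := rfl
  refine SemidirectProduct.ext ?_ ?_
  · simp [mul_left, cEl, h1, mul_comm]
  · simp [mul_right, cEl]

lemma CsubQ_le_center (r q n : ℕ) : CsubQ r q n ≤ Subgroup.center (GG r n) :=
  Subgroup.zpowers_le.mpr (pow_mem (cEl_mem_center r n) _)

instance CsubIn_normal (r p q n : ℕ) : (CsubIn r p q n).Normal := by
  constructor
  intro x hx g
  have hx' : (x : GG r n) ∈ CsubQ r q n := hx
  have hc := Subgroup.mem_center_iff.mp (CsubQ_le_center r q n hx') (g : GG r n)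
  have key : ((g * x * g⁻¹ : ↥(Grpn r p n)) : GG r n) = (x : GG r n) := by
    push_cast
    rw [hc]
    group
  show ((g * x * g⁻¹ : ↥(Grpn r p n)) : GG r n) ∈ CsubQ r q n
  rw [key]
  exact hx'

/-- The projective reflection group `G(r,p,q,n) = G(r,p,n)/C_q`. -/
abbrev Gpq (r p q n : ℕ) := ↥(Grpn r p n) ⧸ CsubIn r p q n

/-- The quotient map `G(r,p,n) → G(r,p,q,n)`. -/
def Gmk (r p q n : ℕ) : ↥(Grpn r p n) →* Gpq r p q n := QuotientGroup.mk' (CsubIn r p q n)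

open scoped Classical in
/-- The image in `G(r,p,q,n)` of an element of `G(r,n)` (junk value `1` if it does
not lie in `G(r,p,n)`). -/
noncomputable def toGpq (r p q n : ℕ) (g : GG r n) : Gpq r p q n :=
  if h : g ∈ Grpn r p n then Gmk r p q n ⟨g, h⟩ else 1

/-- The projection `G(r,p,q,n) → Sₙ`, `g ↦ |g|`. -/
def projPerm (r p q n : ℕ) : Gpq r p q n →* Equiv.Perm (Fin n) :=
  QuotientGroup.lift (CsubIn r p q n)
    (SemidirectProduct.rightHom.comp (Grpn r p n).subtype) (by
      intro x hx
      obtain ⟨k, hk⟩ := hx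
      show SemidirectProduct.rightHom ((Grpn r p n).subtype x) = 1
      rw [← hk]
      simp [cEl, ← map_pow, ← map_zpow])

/-- The diagonal subgroup `N(r,p,q,n) = {g ∈ G(r,p,q,n) : |g| = 1}`. -/
def Nsub (r p q n : ℕ) : Subgroup (Gpq r p q n) := (projPerm r p q n).ker

/-- The simple reflection `(a,b)` (a transposition of `Sₙ`) viewed in `G(r,n)`. -/
def swEl (r n : ℕ) (a b : Fin n) : GG r n := SemidirectProduct.inr (Equiv.swap a b)

/-- The element `t_a = (1, (r/2)·e_a)` of `G(r,n)`. -/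
def tEl (r n : ℕ) (a : Fin n) : GG r n :=
  SemidirectProduct.inl (ofAdd (Pi.single a ((r / 2 : ℕ) : ZMod r)))


/-! ### The cocycle table -/

def tblA : ℕ → ℕ → ℕ → ℕ
  | 0, 1, 2 => 0
  | 0, 1, 3 => 14
  | 0, 2, 1 => 8
  | 0, 2, 3 => 6
  | 0, 3, 1 => 10
  | 0, 3, 2 => 4
  | 1, 0, 2 => 4
  | 1, 0, 3 => 6
  | 1, 2, 0 => 12
  | 1, 2, 3 => 14
  | 1, 3, 0 => 2
  | 1, 3, 2 => 0
  | 2, 0, 1 => 10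
  | 2, 0, 3 => 14
  | 2, 1, 0 => 2
  | 2, 1, 3 => 6
  | 2, 3, 0 => 12
  | 2, 3, 1 => 8
  | 3, 0, 1 => 8
  | 3, 0, 2 => 0
  | 3, 1, 0 => 12
  | 3, 1, 2 => 4
  | 3, 2, 0 => 2
  | 3, 2, 1 => 10
  | _, _, _ => 0

def bitsA (π : Equiv.Perm (Fin 4)) (j : Fin 4) : ℕ :=
  if Nat.testBit (tblA (π 0).val (π 1).val (π 2).val) j.val then 1 else 0

def epsP (π : Equiv.Perm (Fin 4)) : ℕ := if Equiv.Perm.sign π = 1 then 0 else 1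

lemma bitsA_cocycle : ∀ π σ : Equiv.Perm (Fin 4), ∀ j : Fin 4,
    (bitsA (π * σ) j + bitsA π j + bitsA σ (π⁻¹ j)) % 2
      = (bitsA (π * σ) 0 + bitsA π 0 + bitsA σ (π⁻¹ 0)) % 2 := by decide

lemma bitsA_le : ∀ (π : Equiv.Perm (Fin 4)) (j : Fin 4), bitsA π j ≤ 1 := by
  intro π j; unfold bitsA; split <;> omega

lemma epsP_le (π : Equiv.Perm (Fin 4)) : epsP π ≤ 1 := by
  unfold epsP; split <;> omega

lemma bitsA_parity : ∀ π : Equiv.Perm (Fin 4),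
    (bitsA π 0 + bitsA π 1 + bitsA π 2 + bitsA π 3) % 2 = epsP π := by decide

lemma bitsA_one : ∀ j, bitsA 1 j = 0 := by decide

lemma epsP_one : epsP 1 = 0 := by decide

lemma epsP_mul (π σ : Equiv.Perm (Fin 4)) :
    ∃ k, epsP π + epsP σ = epsP (π * σ) + 2 * k := by
  have h : epsP (π * σ) % 2 = (epsP π + epsP σ) % 2 := by
    rcases Int.units_eq_one_or (Equiv.Perm.sign π) with h1 | h1 <;>
      rcases Int.units_eq_one_or (Equiv.Perm.sign σ) with h2 | h2 <;>
        simp [epsP, map_mul, h1, h2]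
  have h1 := epsP_le π; have h2 := epsP_le σ; have h3 := epsP_le (π * σ)
  refine ⟨(epsP π + epsP σ) / 2, ?_⟩
  omega

/-! ### Arithmetic lemmas -/

section arith
variable {r p q : ℕ}

lemma two_dvd_r (hr : 0 < r) (hq : q ∣ r) (hqe : Even q) : 2 ∣ r :=
  dvd_trans hqe.two_dvd hq

lemma half_cast_mul_two (h2 : 2 ∣ r) : ((r / 2 : ℕ) : ZMod r) + ((r / 2 : ℕ) : ZMod r) = 0 := by
  rw [← Nat.cast_add]
  have : r / 2 + r / 2 = r := by omega
  rw [this, ZMod.natCast_self]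

lemma nat_mul_half (h2 : 2 ∣ r) (b : ℕ) :
    ((b : ℕ) : ZMod r) * ((r / 2 : ℕ) : ZMod r) = ((b % 2 : ℕ) : ZMod r) * ((r / 2 : ℕ) : ZMod r) := by
  have hb : b = 2 * (b / 2) + b % 2 := by omega
  have h0 : ((2 : ℕ) : ZMod r) * ((r / 2 : ℕ) : ZMod r) = 0 := by
    rw [Nat.cast_ofNat, two_mul]; exact half_cast_mul_two h2
  calc ((b : ℕ) : ZMod r) * ((r / 2 : ℕ) : ZMod r)
      = ((2 * (b / 2) + b % 2 : ℕ) : ZMod r) * ((r / 2 : ℕ) : ZMod r) := by rw [← hb]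
    _ = ((b / 2 : ℕ) : ZMod r) * (((2:ℕ) : ZMod r) * ((r / 2 : ℕ) : ZMod r))
          + ((b % 2 : ℕ) : ZMod r) * ((r / 2 : ℕ) : ZMod r) := by push_cast; ring
    _ = ((b % 2 : ℕ) : ZMod r) * ((r / 2 : ℕ) : ZMod r) := by rw [h0]; ring

lemma two_mul_r2q (hrq : Even (r / q)) : 2 * (r / (2 * q)) = r / q := by
  obtain ⟨c, hc⟩ := hrq
  have h1 : r / (2 * q) = r / q / 2 := by
    rw [mul_comm, ← Nat.div_div_eq_div_mul]
  omega

lemma odd_arith (hr : 0 < r) (hp : p ∣ r) (hq : q ∣ r) (hdvd : p * q ∣ 4 * r)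
    (hop : Odd (r / p)) (hrq : Even (r / q)) (hm : Odd (4 * r / (p * q))) :
    ∃ t, r / 2 + 4 * (r / (2 * q)) = p * t := by
  have hppos : 0 < p := Nat.pos_of_dvd_of_pos hp hr
  have hqpos : 0 < q := Nat.pos_of_dvd_of_pos hq hr
  obtain ⟨o, ho⟩ := hp
  have hro : r / p = o := by rw [ho]; exact Nat.mul_div_cancel_left o hppos
  rw [hro] at hop
  obtain ⟨m, hm4⟩ := hdvd
  have hrm : 4 * r / (p * q) = m := by
    rw [hm4]; exact Nat.mul_div_cancel_left m (Nat.mul_pos hppos hqpos)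
  rw [hrm] at hm
  -- 4 * o = q * m
  have h4o : 4 * o = q * m := by
    have : 4 * (p * o) = p * (q * m) := by rw [← ho]; linarith [hm4]
    have hp' : p * (4 * o) = p * (q * m) := by ring_nf; ring_nf at this; linarith
    exact Nat.eq_of_mul_eq_mul_left hppos hp'
  -- 4 ∣ q
  have hcop : Nat.Coprime 4 m := by
    have : Nat.Coprime 2 m := (Nat.coprime_two_left).mpr hm
    simpa [show (4:ℕ) = 2^2 by norm_num] using Nat.Coprime.pow_left 2 this
  have h4q : 4 ∣ q := by
    refine hcop.dvd_of_dvd_mul_right ?_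
    exact ⟨o, by omega⟩
  obtain ⟨u, hu⟩ := h4q
  have hou : o = u * m := by
    have : 4 * o = 4 * (u * m) := by rw [h4o, hu]; ring
    omega
  have hum : Odd u := by
    rw [hou] at hop
    exact (Nat.odd_mul.mp hop).1
  -- a := r / q
  obtain ⟨a, ha⟩ := hq
  have hra : r / q = a := by rw [ha]; exact Nat.mul_div_cancel_left a hqpos
  rw [hra] at hrq
  obtain ⟨a₂, ha₂⟩ := hrq
  have hupos : 0 < u := hum.pos
  -- q * a = p * u * m  so 4 * a = p * m
  have h4a : 4 * a = p * m := by
    have h1 : q * a = p * (u * m) := by rw [← ha, ho, hou]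
    rw [hu] at h1
    have : u * (4 * a) = u * (p * m) := by ring_nf; ring_nf at h1; linarith
    exact Nat.eq_of_mul_eq_mul_left hupos this
  -- 8 ∣ p
  have h8a : 8 * a₂ = p * m := by omega
  have hcop8 : Nat.Coprime 8 m := by
    have : Nat.Coprime 2 m := (Nat.coprime_two_left).mpr hm
    simpa [show (8:ℕ) = 2^3 by norm_num] using Nat.Coprime.pow_left 3 this
  have h8p : 8 ∣ p := by
    refine hcop8.dvd_of_dvd_mul_right ?_
    exact ⟨a₂, by omega⟩
  obtain ⟨w, hw⟩ := h8p
  have ha₂w : a₂ = w * m := by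
    have : 8 * a₂ = 8 * (w * m) := by rw [h8a, hw]; ring
    omega
  -- r = p * u * m = 8 w u m ; r/2 = 4 w u m ; r/(2q) = a₂ = w m
  have hrval : r = 8 * (w * u * m) := by rw [ho, hou, hw]; ring
  have hr2 : r / 2 = 4 * (w * u * m) := by omega
  have hr2q : r / (2 * q) = a₂ := by
    rw [mul_comm, ← Nat.div_div_eq_div_mul, show r / q = a from hra]
    omega
  obtain ⟨u', hu'⟩ := hum
  refine ⟨m * (u' + 1), ?_⟩
  rw [hr2, hr2q, ha₂w, hw, hu']
  ring

lemma even_arith (hr : 0 < r) (hp : p ∣ r) (hep : Even (r / p)) :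
    ∃ t, r / 2 = p * t := by
  have hppos : 0 < p := Nat.pos_of_dvd_of_pos hp hr
  obtain ⟨o, ho⟩ := hp
  have hro : r / p = o := by rw [ho]; exact Nat.mul_div_cancel_left o hppos
  rw [hro] at hep
  obtain ⟨c, hc⟩ := hep
  refine ⟨c, ?_⟩
  have : r = 2 * (p * c) := by rw [ho, hc]; ring
  omega

lemma four_rq_arith (hr : 0 < r) (hq : q ∣ r) (hdvd : p * q ∣ 4 * r) :
    ∃ t, 4 * (r / q) = p * t := by
  have hqpos : 0 < q := Nat.pos_of_dvd_of_pos hq hr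
  obtain ⟨a, ha⟩ := hq
  have hra : r / q = a := by rw [ha]; exact Nat.mul_div_cancel_left a hqpos
  obtain ⟨m, hm4⟩ := hdvd
  refine ⟨m, ?_⟩
  rw [hra]
  have : q * (4 * a) = q * (p * m) := by
    have : 4 * (q * a) = p * q * m := by rw [← ha]; exact hm4
    ring_nf; ring_nf at this; linarith
  exact Nat.eq_of_mul_eq_mul_left hqpos this

end arith
/-! ### The twisting cochain in `(ZMod r)⁴` and elements of `GG r 4` -/

def Avec (r : ℕ) (π : Equiv.Perm (Fin 4)) : Fin 4 → ZMod r :=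
  fun j => ((bitsA π j : ℕ) : ZMod r) * ((r / 2 : ℕ) : ZMod r)

section GGlemmas
variable {r : ℕ}

lemma permAct_ofAdd (π : Equiv.Perm (Fin 4)) (v : Fin 4 → ZMod r) :
    permAct r 4 π (ofAdd v) = ofAdd (fun j => v (π⁻¹ j)) := rfl

lemma cEl_pow (m : ℕ) : cEl r 4 ^ m = inl (ofAdd fun _ => ((m : ℕ) : ZMod r)) := by
  rw [cEl, ← map_pow]
  congr 1
  rw [← ofAdd_nsmul]
  congr 1
  funext j
  simp

lemma cEl_pow_comm (m : ℕ) (g : GG r 4) : g * cEl r 4 ^ m = cEl r 4 ^ m * g := by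
  have := Subgroup.mem_center_iff.mp (pow_mem (cEl_mem_center r 4) m) g
  rw [this]

lemma inl_ofAdd_mul (v w : Fin 4 → ZMod r) :
    (inl (ofAdd v) : GG r 4) * inl (ofAdd w) = inl (ofAdd (v + w)) := by
  rw [← map_mul]; rfl

lemma mixed_mul (v w : Fin 4 → ZMod r) (π σ : Equiv.Perm (Fin 4)) :
    ((inl (ofAdd v) * inr π : GG r 4)) * (inl (ofAdd w) * inr σ)
      = inl (ofAdd (v + fun j => w (π⁻¹ j))) * inr (π * σ) := by
  refine SemidirectProduct.ext ?_ ?_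
  · simp only [mul_left, mul_right, left_inl, left_inr, right_inl, right_inr,
      map_one, one_mul, mul_one, MulAut.one_apply, permAct_ofAdd, map_mul]
    rw [← ofAdd_add]
  · simp only [mul_right, right_inl, right_inr, one_mul, mul_one]

end GGlemmas

/-! ### The big quotient `QQ` -/

instance CsubQ_normal (r q n : ℕ) : (CsubQ r q n).Normal := by
  constructor
  intro x hx g
  have hc := Subgroup.mem_center_iff.mp (CsubQ_le_center r q n hx) g
  rw [hc, mul_assoc, mul_inv_cancel, mul_one]
  exact hx

abbrev QQ (r q : ℕ) := GG r 4 ⧸ CsubQ r q 4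

def mkQQ (r q : ℕ) : GG r 4 →* QQ r q := QuotientGroup.mk' (CsubQ r q 4)

section QQlemmas
variable {r p q : ℕ}

lemma mkQQ_c_rq : mkQQ r q (cEl r 4 ^ (r / q)) = 1 :=
  (QuotientGroup.eq_one_iff _).mpr (Subgroup.mem_zpowers _)

lemma mkQQ_c_half (hr : 0 < r) (hq : q ∣ r) (hqe : Even q) :
    mkQQ r q (cEl r 4 ^ (r / 2)) = 1 := by
  have hqpos : 0 < q := Nat.pos_of_dvd_of_pos hq hr
  obtain ⟨a, ha⟩ := hq
  obtain ⟨b, hb⟩ := hqe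
  have hrq : r / q = a := by rw [ha]; exact Nat.mul_div_cancel_left a hqpos
  have h2 : r / 2 = r / q * b := by
    rw [hrq]
    have : r = 2 * (a * b) := by rw [ha, hb]; ring
    omega
  rw [h2, pow_mul, map_pow, mkQQ_c_rq, one_pow]

lemma mkQQ_c_half_mul (hr : 0 < r) (hq : q ∣ r) (hqe : Even q) (k : ℕ) :
    mkQQ r q (cEl r 4 ^ (k * (r / 2))) = 1 := by
  rw [mul_comm, pow_mul, map_pow, mkQQ_c_half hr hq hqe, one_pow]

end QQlemmas

/-! ### The twisted homomorphism -/

def Ee (r p q : ℕ) : ℕ := if Even (r / p) then 0 else r / (2 * q)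

def MP (r : ℕ) (π : Equiv.Perm (Fin 4)) : GG r 4 := inl (ofAdd (Avec r π)) * inr π

def Mel (r p q : ℕ) (π : Equiv.Perm (Fin 4)) : GG r 4 :=
  MP r π * cEl r 4 ^ (Ee r p q * epsP π)

section Fdef
variable (r p q : ℕ)

/-- `mkQQ (cEl ^ (2 * Ee)) = 1`. -/
lemma mkQQ_c_2E (hcond : Odd (r / p) → Even (r / q) ∧ Odd (4 * r / (p * q))) :
    mkQQ r q (cEl r 4 ^ (2 * Ee r p q)) = 1 := by
  by_cases he : Even (r / p)
  · rw [Ee, if_pos he]; simp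
  · rw [Ee, if_neg he]
    rw [two_mul_r2q (hcond (Nat.not_even_iff_odd.mp he)).1]
    exact mkQQ_c_rq

lemma MP_mul (hr : 0 < r) (hq : q ∣ r) (hqe : Even q) (π σ : Equiv.Perm (Fin 4)) :
    ∃ D : ℕ, MP r π * MP r σ = MP r (π * σ) * cEl r 4 ^ (D * (r / 2)) := by
  have h2 : 2 ∣ r := two_dvd_r hr hq hqe
  refine ⟨(bitsA (π * σ) 0 + bitsA π 0 + bitsA σ (π⁻¹ 0)) % 2, ?_⟩
  set D : ℕ := (bitsA (π * σ) 0 + bitsA π 0 + bitsA σ (π⁻¹ 0)) % 2 with hD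
  unfold MP
  rw [mixed_mul]
  have e1 : ∀ j : Fin 4, ((bitsA π j + bitsA σ (π⁻¹ j) : ℕ) : ZMod r) * ((r / 2 : ℕ) : ZMod r)
      = ((bitsA (π * σ) j + D : ℕ) : ZMod r) * ((r / 2 : ℕ) : ZMod r) := by
    intro j
    have hc := bitsA_cocycle π σ j
    have b1 := bitsA_le (π * σ) j
    have b2 := bitsA_le π j
    have b3 := bitsA_le σ (π⁻¹ j)
    have hnat : (bitsA π j + bitsA σ (π⁻¹ j)) % 2 = (bitsA (π * σ) j + D) % 2 := by omega
    rw [nat_mul_half h2, nat_mul_half h2 (bitsA (π * σ) j + D), hnat]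
  have hco : (Avec r π + fun j => Avec r σ (π⁻¹ j))
      = Avec r (π * σ) + fun _ => ((D * (r / 2) : ℕ) : ZMod r) := by
    funext j
    simp only [Pi.add_apply]
    unfold Avec
    calc ((bitsA π j : ℕ) : ZMod r) * ((r / 2 : ℕ) : ZMod r)
          + ((bitsA σ (π⁻¹ j) : ℕ) : ZMod r) * ((r / 2 : ℕ) : ZMod r)
        = ((bitsA π j + bitsA σ (π⁻¹ j) : ℕ) : ZMod r) * ((r / 2 : ℕ) : ZMod r) := by
          push_cast; ring
      _ = ((bitsA (π * σ) j + D : ℕ) : ZMod r) * ((r / 2 : ℕ) : ZMod r) := e1 j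
      _ = ((bitsA (π * σ) j : ℕ) : ZMod r) * ((r / 2 : ℕ) : ZMod r)
            + ((D * (r / 2) : ℕ) : ZMod r) := by push_cast; ring
  rw [hco, ← inl_ofAdd_mul, cEl_pow (D * (r / 2))]
  refine SemidirectProduct.ext ?_ ?_
  · simp only [mul_left, mul_right, left_inl, right_inl, left_inr, right_inr, map_one,
      MulAut.one_apply, mul_one, one_mul, permAct_ofAdd]
  · simp only [mul_right, right_inl, right_inr, one_mul, mul_one]

lemma Mel_one : Mel r p q 1 = 1 := by
  unfold Mel MP
  have h1 : Avec r 1 = 0 := by funext j; simp [Avec, bitsA_one]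
  rw [h1, epsP_one, mul_zero, pow_zero, mul_one]
  show inl (ofAdd 0) * inr 1 = 1
  simp

lemma Mel_mul (hr : 0 < r) (hq : q ∣ r) (hqe : Even q)
    (hcond : Odd (r / p) → Even (r / q) ∧ Odd (4 * r / (p * q)))
    (π σ : Equiv.Perm (Fin 4)) :
    mkQQ r q (Mel r p q (π * σ)) = mkQQ r q (Mel r p q π) * mkQQ r q (Mel r p q σ) := by
  obtain ⟨k, hk⟩ := epsP_mul π σ
  obtain ⟨D, hMP⟩ := MP_mul r q hr hq hqe π σ
  have hcomm : Commute (cEl r 4 ^ (Ee r p q * epsP π)) (MP r σ) :=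
    (cEl_pow_comm (Ee r p q * epsP π) (MP r σ)).symm
  have h5 : Ee r p q * epsP π + Ee r p q * epsP σ
      = Ee r p q * epsP (π * σ) + 2 * Ee r p q * k := by
    rw [← Nat.mul_add, hk]; ring
  have key : Mel r p q π * Mel r p q σ
      = Mel r p q (π * σ) * cEl r 4 ^ (D * (r / 2)) * cEl r 4 ^ (2 * Ee r p q * k) := by
    unfold Mel
    calc MP r π * cEl r 4 ^ (Ee r p q * epsP π) * (MP r σ * cEl r 4 ^ (Ee r p q * epsP σ))
        = MP r π * MP r σ
            * (cEl r 4 ^ (Ee r p q * epsP π) * cEl r 4 ^ (Ee r p q * epsP σ)) :=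
          Commute.mul_mul_mul_comm hcomm _ _
      _ = MP r (π * σ) * cEl r 4 ^ (D * (r / 2))
            * cEl r 4 ^ (Ee r p q * epsP π + Ee r p q * epsP σ) := by rw [hMP, ← pow_add]
      _ = MP r (π * σ)
            * cEl r 4 ^ (D * (r / 2) + (Ee r p q * epsP π + Ee r p q * epsP σ)) := by
          rw [mul_assoc, ← pow_add]
      _ = MP r (π * σ)
            * (cEl r 4 ^ (Ee r p q * epsP (π * σ))
                * (cEl r 4 ^ (D * (r / 2)) * cEl r 4 ^ (2 * Ee r p q * k))) := by
          rw [← pow_add, ← pow_add]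
          have hexp : D * (r / 2) + (Ee r p q * epsP π + Ee r p q * epsP σ)
              = Ee r p q * epsP (π * σ) + (D * (r / 2) + 2 * Ee r p q * k) := by omega
          rw [hexp]
      _ = MP r (π * σ) * cEl r 4 ^ (Ee r p q * epsP (π * σ)) * cEl r 4 ^ (D * (r / 2))
            * cEl r 4 ^ (2 * Ee r p q * k) := by
          rw [← mul_assoc, ← mul_assoc]
  rw [← map_mul, key, map_mul, map_mul, mkQQ_c_half_mul hr hq hqe, mul_one]
  rw [pow_mul, map_pow, mkQQ_c_2E r p q hcond, one_pow, mul_one]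

end Fdef
/-! ### The lifted homomorphism `F : GG r 4 →* QQ r q` -/

section Fsec
variable (r p q : ℕ)

lemma inl_comm (a b : Multiplicative (Fin 4 → ZMod r)) :
    (inl a : GG r 4) * inl b = inl b * inl a := by
  rw [← map_mul, ← map_mul, mul_comm]

lemma conj_central (x : GG r 4) (m : ℕ) (g : GG r 4) :
    (g * cEl r 4 ^ m) * x * (g * cEl r 4 ^ m)⁻¹ = g * x * g⁻¹ := by
  have h1 : cEl r 4 ^ m * x * (cEl r 4 ^ m)⁻¹ = x := by
    rw [← cEl_pow_comm m x, mul_inv_cancel_right]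
  calc (g * cEl r 4 ^ m) * x * (g * cEl r 4 ^ m)⁻¹
      = g * (cEl r 4 ^ m * x * (cEl r 4 ^ m)⁻¹) * g⁻¹ := by
        rw [mul_inv_rev]; group
    _ = g * x * g⁻¹ := by rw [h1]

lemma MP_conj (π : Equiv.Perm (Fin 4)) (x : Multiplicative (Fin 4 → ZMod r)) :
    MP r π * inl x * (MP r π)⁻¹ = inl (permAct r 4 π x) := by
  unfold MP
  calc inl (ofAdd (Avec r π)) * inr π * inl x * (inl (ofAdd (Avec r π)) * inr π)⁻¹
      = inl (ofAdd (Avec r π)) * (inr π * inl x * (inr π)⁻¹)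
          * (inl (ofAdd (Avec r π)))⁻¹ := by rw [mul_inv_rev]; group
    _ = inl (ofAdd (Avec r π)) * inl (permAct r 4 π x)
          * (inl (ofAdd (Avec r π)))⁻¹ := by rw [← map_inv, ← SemidirectProduct.inl_aut]
    _ = inl (permAct r 4 π x) := by rw [inl_comm, mul_inv_cancel_right]

lemma Mel_conj (π : Equiv.Perm (Fin 4)) (x : Multiplicative (Fin 4 → ZMod r)) :
    Mel r p q π * inl x * (Mel r p q π)⁻¹ = inl (permAct r 4 π x) := by
  unfold Mel
  rw [conj_central, MP_conj]

variable (hr : 0 < r) (hp : p ∣ r) (hq : q ∣ r) (hdvd : p * q ∣ 4 * r)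
  (hqe : Even q) (hcond : Odd (r / p) → Even (r / q) ∧ Odd (4 * r / (p * q)))

def F2 : Equiv.Perm (Fin 4) →* QQ r q where
  toFun π := mkQQ r q (Mel r p q π)
  map_one' := by
    show mkQQ r q (Mel r p q 1) = 1
    rw [Mel_one]; exact map_one _
  map_mul' π σ := Mel_mul r p q hr hq hqe hcond π σ

def F1 : Multiplicative (Fin 4 → ZMod r) →* QQ r q :=
  (mkQQ r q).comp (SemidirectProduct.inl (φ := permAct r 4))

def FF : GG r 4 →* QQ r q :=
  SemidirectProduct.lift (F1 r q) (F2 r p q hr hq hqe hcond) (by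
    intro π
    refine MonoidHom.ext fun x => ?_
    show mkQQ r q (inl (permAct r 4 π x))
      = F2 r p q hr hq hqe hcond π * mkQQ r q (inl x) * (F2 r p q hr hq hqe hcond π)⁻¹
    show mkQQ r q (inl (permAct r 4 π x))
      = mkQQ r q (Mel r p q π) * mkQQ r q (inl x) * (mkQQ r q (Mel r p q π))⁻¹
    rw [← map_inv, ← map_mul, ← map_mul, Mel_conj])

/-- The element underlying `FF g` in `GG r 4`. -/
def Traw (g : GG r 4) : GG r 4 :=
  inl (ofAdd (Avec r g.right)) * g * cEl r 4 ^ (Ee r p q * epsP g.right)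

lemma Traw_right (g : GG r 4) : (Traw r p q g).right = g.right := by
  unfold Traw
  rw [cEl_pow]
  simp only [mul_right, right_inl, right_inr, one_mul, mul_one]

lemma FF_apply (g : GG r 4) : FF r p q hr hq hqe hcond g = mkQQ r q (Traw r p q g) := by
  have h0 : FF r p q hr hq hqe hcond g
      = mkQQ r q (inl g.left) * mkQQ r q (Mel r p q g.right) := rfl
  rw [h0, ← map_mul]
  congr 1
  unfold Mel MP Traw
  calc inl g.left * (inl (ofAdd (Avec r g.right)) * inr g.right
          * cEl r 4 ^ (Ee r p q * epsP g.right))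
      = inl (ofAdd (Avec r g.right)) * (inl g.left * inr g.right)
          * cEl r 4 ^ (Ee r p q * epsP g.right) := by
        rw [← mul_assoc, ← mul_assoc, inl_comm,
          mul_assoc (inl (ofAdd (Avec r g.right))) (inl g.left) (inr g.right)]
    _ = inl (ofAdd (Avec r g.right)) * g * cEl r 4 ^ (Ee r p q * epsP g.right) := by
        rw [inl_left_mul_inr_right]

end Fsec
/-! ### Membership computations for `Grpn` -/

section MemSec
variable (r p q : ℕ)

lemma Delta_inl (v : Fin 4 → ZMod r) :
    DeltaHom r 4 (inl (ofAdd v)) = ofAdd (∑ j, v j) := by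
  rw [DeltaHom, SemidirectProduct.lift_inl]; rfl

lemma Delta_inr (π : Equiv.Perm (Fin 4)) : DeltaHom r 4 (inr π) = 1 := by
  rw [DeltaHom, SemidirectProduct.lift_inr]; rfl

lemma Delta_cpow (m : ℕ) :
    DeltaHom r 4 (cEl r 4 ^ m) = ofAdd (((4 * m : ℕ) : ZMod r)) := by
  rw [cEl_pow, Delta_inl]
  congr 1
  rw [Finset.sum_const, Finset.card_univ]
  simp only [Fintype.card_fin, nsmul_eq_mul]
  push_cast
  ring

lemma Delta_Avec (π : Equiv.Perm (Fin 4)) : (∑ j, Avec r π j)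
    = (((bitsA π 0 + bitsA π 1 + bitsA π 2 + bitsA π 3) : ℕ) : ZMod r)
        * ((r / 2 : ℕ) : ZMod r) := by
  rw [Fin.sum_univ_four]
  unfold Avec
  push_cast
  ring

lemma mem_pZ_nat (t : ℕ) (x : Multiplicative (ZMod r))
    (hx : toAdd x = ((p * t : ℕ) : ZMod r)) : x ∈ pZ r p := by
  have : toAdd x ∈ AddSubgroup.zmultiples ((p : ℕ) : ZMod r) := by
    refine AddSubgroup.mem_zmultiples_iff.mpr ⟨(t : ℤ), ?_⟩
    rw [hx, zsmul_eq_mul]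
    push_cast
    ring
  exact this

lemma one_mem_pZ : (1 : Multiplicative (ZMod r)) ∈ pZ r p :=
  mem_pZ_nat r p 0 1 (by simp)

variable (hr : 0 < r) (hp : p ∣ r) (hq : q ∣ r) (hdvd : p * q ∣ 4 * r)
  (hqe : Even q) (hcond : Odd (r / p) → Even (r / q) ∧ Odd (4 * r / (p * q)))

include hr hp hq hdvd hqe hcond in
lemma extra_mem (π : Equiv.Perm (Fin 4)) :
    DeltaHom r 4 (inl (ofAdd (Avec r π)))
      * DeltaHom r 4 (cEl r 4 ^ (Ee r p q * epsP π)) ∈ pZ r p := by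
  have h2 : 2 ∣ r := two_dvd_r hr hq hqe
  set B : ℕ := bitsA π 0 + bitsA π 1 + bitsA π 2 + bitsA π 3 with hB
  have hval : DeltaHom r 4 (inl (ofAdd (Avec r π)))
      * DeltaHom r 4 (cEl r 4 ^ (Ee r p q * epsP π))
      = ofAdd (((B : ℕ) : ZMod r) * ((r / 2 : ℕ) : ZMod r)
          + ((4 * (Ee r p q * epsP π) : ℕ) : ZMod r)) := by
    rw [Delta_inl, Delta_cpow, Delta_Avec, ← ofAdd_add]
  have hpar := bitsA_parity π
  rw [hval]
  by_cases hs : epsP π = 0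
  · -- the even permutation case: the extra term is trivial
    have hB0 : B % 2 = 0 := by rw [hB, hpar, hs]
    have hz : ((B : ℕ) : ZMod r) * ((r / 2 : ℕ) : ZMod r)
        + ((4 * (Ee r p q * epsP π) : ℕ) : ZMod r) = 0 := by
      rw [nat_mul_half h2, hB0, hs, mul_zero, mul_zero]
      simp
    rw [hz]
    exact one_mem_pZ r p
  · have hs1 : epsP π = 1 := by have := epsP_le π; omega
    have hB1 : B % 2 = 1 := by rw [hB, hpar, hs1]
    have hBh : ((B : ℕ) : ZMod r) * ((r / 2 : ℕ) : ZMod r) = ((r / 2 : ℕ) : ZMod r) := by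
      rw [nat_mul_half h2, hB1, Nat.cast_one, one_mul]
    by_cases hev : Even (r / p)
    · obtain ⟨t, ht⟩ := even_arith hr hp hev
      refine mem_pZ_nat r p t _ ?_
      rw [toAdd_ofAdd, hBh, Ee, if_pos hev, zero_mul, mul_zero]
      rw [ht]
      simp
    · have hodd : Odd (r / p) := Nat.not_even_iff_odd.mp hev
      obtain ⟨hrq2, hm⟩ := hcond hodd
      obtain ⟨t, ht⟩ := odd_arith hr hp hq hdvd hodd hrq2 hm
      refine mem_pZ_nat r p t _ ?_
      rw [toAdd_ofAdd, hBh, Ee, if_neg hev, hs1, mul_one]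
      rw [← Nat.cast_add, ← ht]
  -- done

lemma mem_Grpn_iff (g : GG r 4) : g ∈ Grpn r p 4 ↔ DeltaHom r 4 g ∈ pZ r p := Iff.rfl

lemma inr_mem_Grpn (π : Equiv.Perm (Fin 4)) : inr π ∈ Grpn r p 4 := by
  rw [mem_Grpn_iff, Delta_inr]
  exact one_mem_pZ r p

include hr hp hq hdvd hqe hcond in
lemma Traw_mem (g : GG r 4) (hg : g ∈ Grpn r p 4) : Traw r p q g ∈ Grpn r p 4 := by
  rw [mem_Grpn_iff]
  have h1 : DeltaHom r 4 (Traw r p q g)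
      = DeltaHom r 4 g * (DeltaHom r 4 (inl (ofAdd (Avec r g.right)))
          * DeltaHom r 4 (cEl r 4 ^ (Ee r p q * epsP g.right))) := by
    unfold Traw
    rw [map_mul, map_mul]
    rw [mul_comm (DeltaHom r 4 (inl (ofAdd (Avec r g.right)))) (DeltaHom r 4 g), mul_assoc]
  rw [h1]
  exact mul_mem hg (extra_mem r p q hr hp hq hdvd hqe hcond g.right)

include hr hp hq hdvd hqe hcond in
lemma c2E_mem_Grpn : cEl r 4 ^ (2 * Ee r p q) ∈ Grpn r p 4 := by
  rw [mem_Grpn_iff, Delta_cpow]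
  by_cases hev : Even (r / p)
  · rw [Ee, if_pos hev]
    exact mem_pZ_nat r p 0 _ (by simp)
  · have hodd : Odd (r / p) := Nat.not_even_iff_odd.mp hev
    obtain ⟨hrq2, hm⟩ := hcond hodd
    obtain ⟨t, ht⟩ := four_rq_arith hr hq hdvd
    refine mem_pZ_nat r p t _ ?_
    rw [toAdd_ofAdd, Ee, if_neg hev]
    rw [show 4 * (2 * (r / (2 * q))) = 4 * (2 * (r / (2 * q))) from rfl]
    rw [show 2 * (r / (2 * q)) = r / q from two_mul_r2q hrq2, ← ht]

include hr hp hq hdvd hqe hcond in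
lemma c2E_mem_CsubQ : cEl r 4 ^ (2 * Ee r p q) ∈ CsubQ r q 4 := by
  by_cases hev : Even (r / p)
  · rw [Ee, if_pos hev, mul_zero, pow_zero]
    exact one_mem _
  · have hodd : Odd (r / p) := Nat.not_even_iff_odd.mp hev
    rw [Ee, if_neg hev, two_mul_r2q (hcond hodd).1]
    exact Subgroup.mem_zpowers _

include hr hp hq hdvd hqe hcond in
lemma crq_mem_Grpn : cEl r 4 ^ (r / q) ∈ Grpn r p 4 := by
  rw [mem_Grpn_iff, Delta_cpow]
  obtain ⟨t, ht⟩ := four_rq_arith (p := p) hr hq hdvd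
  exact mem_pZ_nat r p t _ (by rw [toAdd_ofAdd, ht])

end MemSec
/-! ### The induced endomorphism of `Gpq` -/

section PhiSec
variable (r p q : ℕ)

def iotaQ : Gpq r p q 4 →* QQ r q :=
  QuotientGroup.lift (CsubIn r p q 4) ((mkQQ r q).comp (Grpn r p 4).subtype) (by
    intro x hx
    show mkQQ r q ((x : GG r 4)) = 1
    exact (QuotientGroup.eq_one_iff _).mpr hx)

lemma iotaQ_mk (g : ↥(Grpn r p 4)) : iotaQ r p q (Gmk r p q 4 g) = mkQQ r q ↑g := rfl

lemma iotaQ_inj : Function.Injective (iotaQ r p q) := by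
  refine (injective_iff_map_eq_one _).mpr ?_
  intro x hx
  obtain ⟨g, rfl⟩ := QuotientGroup.mk'_surjective (CsubIn r p q 4) x
  have hx' : mkQQ r q ↑g = 1 := hx
  have hmem : (g : GG r 4) ∈ CsubQ r q 4 := (QuotientGroup.eq_one_iff _).mp hx'
  exact (QuotientGroup.eq_one_iff _).mpr hmem

variable (hr : 0 < r) (hp : p ∣ r) (hq : q ∣ r) (hdvd : p * q ∣ 4 * r)
  (hqe : Even q) (hcond : Odd (r / p) → Even (r / q) ∧ Odd (4 * r / (p * q)))

def phi1 : ↥(Grpn r p 4) →* Gpq r p q 4 where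
  toFun g := Gmk r p q 4 ⟨Traw r p q ↑g, Traw_mem r p q hr hp hq hdvd hqe hcond ↑g g.2⟩
  map_one' := by
    apply iotaQ_inj r p q
    rw [map_one]
    show mkQQ r q (Traw r p q ↑(1 : ↥(Grpn r p 4))) = 1
    rw [← FF_apply r p q hr hq hqe hcond]
    rw [OneMemClass.coe_one, map_one]
  map_mul' g g' := by
    apply iotaQ_inj r p q
    rw [map_mul]
    show mkQQ r q (Traw r p q ↑(g * g'))
      = mkQQ r q (Traw r p q ↑g) * mkQQ r q (Traw r p q ↑g')
    rw [← FF_apply r p q hr hq hqe hcond, ← FF_apply r p q hr hq hqe hcond,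
      ← FF_apply r p q hr hq hqe hcond, Subgroup.coe_mul, map_mul]

lemma phi1_ker (x : ↥(Grpn r p 4)) (hx : x ∈ CsubIn r p q 4) :
    phi1 r p q hr hp hq hdvd hqe hcond x = 1 := by
  apply iotaQ_inj r p q
  rw [map_one]
  show mkQQ r q (Traw r p q ↑x) = 1
  rw [← FF_apply r p q hr hq hqe hcond]
  have hx' : (x : GG r 4) ∈ CsubQ r q 4 := hx
  obtain ⟨k, hk⟩ := hx'
  rw [← hk, map_zpow]
  have hc : FF r p q hr hq hqe hcond (cEl r 4 ^ (r / q)) = mkQQ r q (cEl r 4 ^ (r / q)) := by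
    rw [cEl_pow, FF, SemidirectProduct.lift_inl]
    rfl
  rw [hc, mkQQ_c_rq, one_zpow]

def phi0 : Gpq r p q 4 →* Gpq r p q 4 :=
  QuotientGroup.lift (CsubIn r p q 4) (phi1 r p q hr hp hq hdvd hqe hcond)
    (phi1_ker r p q hr hp hq hdvd hqe hcond)

lemma phi0_mk (g : ↥(Grpn r p 4)) (hT : Traw r p q ↑g ∈ Grpn r p 4) :
    phi0 r p q hr hp hq hdvd hqe hcond (Gmk r p q 4 g) = Gmk r p q 4 ⟨Traw r p q ↑g, hT⟩ :=
  rfl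

/-! ### The diagonal subgroup -/

lemma projPerm_mk (g : ↥(Grpn r p 4)) :
    projPerm r p q 4 (Gmk r p q 4 g) = (g : GG r 4).right := rfl

lemma mem_Nsub_mk (g : ↥(Grpn r p 4)) :
    Gmk r p q 4 g ∈ Nsub r p q 4 ↔ ((g : GG r 4)).right = 1 := by
  rw [Nsub, MonoidHom.mem_ker, projPerm_mk]

lemma Avec_one : Avec r 1 = 0 := by
  funext j; simp [Avec, bitsA_one]

lemma Traw_of_right_one (g : GG r 4) (h1 : g.right = 1) : Traw r p q g = g := by
  unfold Traw
  rw [h1, Avec_one, epsP_one, mul_zero, pow_zero, mul_one, ofAdd_zero, map_one, one_mul]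

lemma phi0_fix_N : ∀ x ∈ Nsub r p q 4, phi0 r p q hr hp hq hdvd hqe hcond x = x := by
  intro x hx
  obtain ⟨g, rfl⟩ := QuotientGroup.mk'_surjective (CsubIn r p q 4) x
  have h1 : (g : GG r 4).right = 1 := (mem_Nsub_mk r p q g).mp hx
  show phi0 r p q hr hp hq hdvd hqe hcond (Gmk r p q 4 g) = Gmk r p q 4 g
  rw [phi0_mk r p q hr hp hq hdvd hqe hcond g
    (by rw [Traw_of_right_one r p q _ h1]; exact g.2)]
  congr 1
  exact Subtype.ext (Traw_of_right_one r p q _ h1)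

/-! ### Generation of `Gpq` by `Nsub` and the simple reflections -/

lemma inl_left_mem (g : GG r 4) (hg : g ∈ Grpn r p 4) : inl g.left ∈ Grpn r p 4 := by
  rw [mem_Grpn_iff]
  have hΔ : DeltaHom r 4 g = DeltaHom r 4 (inl g.left) := by
    conv_lhs => rw [← inl_left_mul_inr_right g]
    rw [map_mul, Delta_inr, mul_one]
  rw [← hΔ]
  exact hg

lemma permGen : Subgroup.closure
    ({Equiv.swap 0 1, Equiv.swap 1 2, Equiv.swap 2 3} : Set (Equiv.Perm (Fin 4))) = ⊤ := by
  set S : Set (Equiv.Perm (Fin 4)) := {Equiv.swap 0 1, Equiv.swap 1 2, Equiv.swap 2 3} with hS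
  rw [eq_top_iff, ← Equiv.Perm.closure_isSwap, Subgroup.closure_le]
  have h01 : Equiv.swap (0 : Fin 4) 1 ∈ Subgroup.closure S :=
    Subgroup.subset_closure (by simp [hS])
  have h12 : Equiv.swap (1 : Fin 4) 2 ∈ Subgroup.closure S :=
    Subgroup.subset_closure (by simp [hS])
  have h23 : Equiv.swap (2 : Fin 4) 3 ∈ Subgroup.closure S :=
    Subgroup.subset_closure (by simp [hS])
  have h02 : Equiv.swap (0 : Fin 4) 2 ∈ Subgroup.closure S :=
    SubmonoidClass.swap_mem_trans _ h01 h12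
  have h03 : Equiv.swap (0 : Fin 4) 3 ∈ Subgroup.closure S :=
    SubmonoidClass.swap_mem_trans _ h02 h23
  have h13 : Equiv.swap (1 : Fin 4) 3 ∈ Subgroup.closure S :=
    SubmonoidClass.swap_mem_trans _ h12 h23
  rintro σ ⟨a, b, hab, rfl⟩
  fin_cases a <;> fin_cases b <;>
    first
      | exact absurd rfl hab
      | exact h01 | exact h02 | exact h03 | exact h12 | exact h13 | exact h23
      | (rw [Equiv.swap_comm]
         first
           | exact h01 | exact h02 | exact h03 | exact h12 | exact h13 | exact h23)

lemma gen_induction (P : Gpq r p q 4 → Prop)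
    (hmul : ∀ x y, P x → P y → P (x * y))
    (hinv : ∀ x, P x → P x⁻¹)
    (hN : ∀ x ∈ Nsub r p q 4, P x)
    (hS : ∀ π ∈ ({Equiv.swap 0 1, Equiv.swap 1 2, Equiv.swap 2 3} :
          Set (Equiv.Perm (Fin 4))),
        ∀ hmem : (inr π : GG r 4) ∈ Grpn r p 4, P (Gmk r p q 4 ⟨inr π, hmem⟩)) :
    ∀ x, P x := by
  set S : Set (Equiv.Perm (Fin 4)) := {Equiv.swap 0 1, Equiv.swap 1 2, Equiv.swap 2 3} with hSdef
  have main : ∀ (π : Equiv.Perm (Fin 4)), ∀ (g : GG r 4) (hg : g ∈ Grpn r p 4),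
      g.right = π → P (Gmk r p q 4 ⟨g, hg⟩) := by
    intro π
    have hπ : π ∈ Subgroup.closure S := by rw [permGen]; trivial
    induction hπ using Subgroup.closure_induction with
    | mem τ hτ =>
      intro g hg hgr
      have hmemN : inl g.left ∈ Grpn r p 4 := inl_left_mem r p g hg
      have hmemS : (inr τ : GG r 4) ∈ Grpn r p 4 := inr_mem_Grpn r p τ
      have hprod : Gmk r p q 4 ⟨g, hg⟩
          = Gmk r p q 4 ⟨inl g.left, hmemN⟩ * Gmk r p q 4 ⟨inr τ, hmemS⟩ := by
        rw [← map_mul]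
        congr 1
        refine Subtype.ext ?_
        show g = inl g.left * inr τ
        rw [← hgr, inl_left_mul_inr_right]
      rw [hprod]
      refine hmul _ _ ?_ ?_
      · exact hN _ ((mem_Nsub_mk r p q _).mpr (by simp [right_inl]))
      · exact hS τ hτ hmemS
    | one =>
      intro g hg hgr
      exact hN _ ((mem_Nsub_mk r p q _).mpr hgr)
    | mul τ υ hτ hυ ihτ ihυ =>
      intro g hg hgr
      have hmem2 : (inr υ : GG r 4) ∈ Grpn r p 4 := inr_mem_Grpn r p υ
      have hmem1 : g * (inr υ)⁻¹ ∈ Grpn r p 4 := mul_mem hg (inv_mem hmem2)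
      have hr1 : (g * (inr υ)⁻¹).right = τ := by
        rw [mul_right, inv_right, right_inr, hgr, mul_inv_cancel_right]
      have hprod : Gmk r p q 4 ⟨g, hg⟩
          = Gmk r p q 4 ⟨g * (inr υ)⁻¹, hmem1⟩ * Gmk r p q 4 ⟨inr υ, hmem2⟩ := by
        rw [← map_mul]
        congr 1
        exact Subtype.ext (by simp)
      rw [hprod]
      exact hmul _ _ (ihτ _ hmem1 hr1) (ihυ _ hmem2 (right_inr υ))
    | inv τ hτ ihτ =>
      intro g hg hgr
      have hmem1 : g⁻¹ ∈ Grpn r p 4 := inv_mem hg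
      have hr1 : (g⁻¹).right = τ := by rw [inv_right, hgr, inv_inv]
      have hP := hinv _ (ihτ g⁻¹ hmem1 hr1)
      have heq : (Gmk r p q 4 ⟨g⁻¹, hmem1⟩)⁻¹ = Gmk r p q 4 ⟨g, hg⟩ := by
        rw [← map_inv]
        congr 1
        exact Subtype.ext (by simp)
      rwa [heq] at hP
  intro x
  obtain ⟨g, rfl⟩ := QuotientGroup.mk'_surjective (CsubIn r p q 4) x
  exact main (g : GG r 4).right g g.2 rfl

end PhiSec
/-! ### Values on the simple reflections, and the involution property -/

section ValSec
variable (r p q : ℕ)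

lemma toGpq_eq (g : GG r 4) (h : g ∈ Grpn r p 4) :
    toGpq r p q 4 g = Gmk r p q 4 ⟨g, h⟩ := by
  unfold toGpq
  exact dif_pos h

lemma Avec_swap (h2 : 2 ∣ r) (σ : Equiv.Perm (Fin 4)) (idx : Fin 4) (d : ℕ)
    (hbits : ∀ j, (bitsA σ j + (if j = idx then 1 else 0)) % 2 = d) :
    Avec r σ = Pi.single idx ((r / 2 : ℕ) : ZMod r)
      + fun _ => ((d * (r / 2) : ℕ) : ZMod r) := by
  funext j
  show ((bitsA σ j : ℕ) : ZMod r) * ((r / 2 : ℕ) : ZMod r) = _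
  simp only [Pi.add_apply]
  have hsingle : (Pi.single idx ((r / 2 : ℕ) : ZMod r) : Fin 4 → ZMod r) j
      = (((if j = idx then 1 else 0 : ℕ)) : ZMod r) * ((r / 2 : ℕ) : ZMod r) := by
    by_cases hj : j = idx
    · subst hj; rw [Pi.single_eq_same, if_pos rfl, Nat.cast_one, one_mul]
    · rw [Pi.single_eq_of_ne hj, if_neg hj, Nat.cast_zero, zero_mul]
  rw [hsingle]
  have hd : d ≤ 1 := by
    have := hbits j
    omega
  calc ((bitsA σ j : ℕ) : ZMod r) * ((r / 2 : ℕ) : ZMod r)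
      = (((bitsA σ j) % 2 : ℕ) : ZMod r) * ((r / 2 : ℕ) : ZMod r) := nat_mul_half h2 _
    _ = ((((if j = idx then 1 else 0) + d) % 2 : ℕ) : ZMod r) * ((r / 2 : ℕ) : ZMod r) := by
        congr 2
        have hb := hbits j
        have hb1 := bitsA_le σ j
        split at hb <;> split <;> omega
    _ = ((((if j = idx then 1 else 0) + d : ℕ)) : ZMod r) * ((r / 2 : ℕ) : ZMod r) := by
        rw [← nat_mul_half h2]
    _ = ((if j = idx then 1 else 0 : ℕ) : ZMod r) * ((r / 2 : ℕ) : ZMod r)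
          + ((d * (r / 2) : ℕ) : ZMod r) := by push_cast; ring

lemma Traw_inr (σ : Equiv.Perm (Fin 4)) : Traw r p q (inr σ)
    = inl (ofAdd (Avec r σ)) * inr σ * cEl r 4 ^ (Ee r p q * epsP σ) := by
  unfold Traw
  rw [right_inr]

lemma Traw_swap (h2 : 2 ∣ r) (a b : Fin 4) (idx : Fin 4) (d : ℕ)
    (hbits : ∀ j, (bitsA (Equiv.swap a b) j + (if j = idx then 1 else 0)) % 2 = d) :
    Traw r p q (swEl r 4 a b) = tEl r 4 idx * swEl r 4 a b * cEl r 4 ^ (d * (r / 2))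
      * cEl r 4 ^ (Ee r p q * epsP (Equiv.swap a b)) := by
  show Traw r p q (inr (Equiv.swap a b)) = _
  rw [Traw_inr, Avec_swap r h2 _ idx d hbits, ← inl_ofAdd_mul, ← cEl_pow]
  have h1 : (inl (ofAdd (Pi.single idx ((r / 2 : ℕ) : ZMod r))) : GG r 4)
      * cEl r 4 ^ (d * (r / 2)) * inr (Equiv.swap a b)
      = inl (ofAdd (Pi.single idx ((r / 2 : ℕ) : ZMod r))) * inr (Equiv.swap a b)
        * cEl r 4 ^ (d * (r / 2)) := by
    rw [mul_assoc, ← cEl_pow_comm (d * (r / 2)) (inr (Equiv.swap a b)), ← mul_assoc]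
  rw [h1]
  rfl

/-- membership of the central elements `c^(d * (r/2))`. -/
lemma c_half_pow_mem_Grpn (h2 : 2 ∣ r) (d : ℕ) :
    cEl r 4 ^ (d * (r / 2)) ∈ Grpn r p 4 := by
  rw [mem_Grpn_iff, Delta_cpow]
  refine mem_pZ_nat r p 0 _ ?_
  rw [toAdd_ofAdd, mul_zero, Nat.cast_zero]
  obtain ⟨r', hr'⟩ := h2
  have hhalf : r / 2 = r' := by omega
  have h4 : 4 * (d * (r / 2)) = 2 * d * r := by rw [hhalf, hr']; ring
  rw [h4]
  push_cast [ZMod.natCast_self]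
  ring

lemma c_half_mem_CsubQ (hr : 0 < r) (hq : q ∣ r) (hqe : Even q) :
    cEl r 4 ^ (r / 2) ∈ CsubQ r q 4 := by
  have hqpos : 0 < q := Nat.pos_of_dvd_of_pos hq hr
  obtain ⟨a, ha⟩ := hq
  obtain ⟨b, hb⟩ := hqe
  have hrq : r / q = a := by rw [ha]; exact Nat.mul_div_cancel_left a hqpos
  have h2 : r / 2 = r / q * b := by
    rw [hrq]
    have : r = 2 * (a * b) := by rw [ha, hb]; ring
    omega
  rw [h2, pow_mul]
  exact pow_mem (Subgroup.mem_zpowers _) b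

lemma c_half_pow_mem_CsubQ (hr : 0 < r) (hq : q ∣ r) (hqe : Even q) (d : ℕ) :
    cEl r 4 ^ (d * (r / 2)) ∈ CsubQ r q 4 := by
  rw [mul_comm, pow_mul]
  exact pow_mem (c_half_mem_CsubQ r q hr hq hqe) d

/-- dividing out a central `c^(d * (r/2))` does not change the class in `Gpq`. -/
lemma Gmk_mul_chalf (hr : 0 < r) (hq : q ∣ r) (hqe : Even q) (x : GG r 4)
    (hx : x ∈ Grpn r p 4) (d : ℕ) (hx' : x * cEl r 4 ^ (d * (r / 2)) ∈ Grpn r p 4) :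
    Gmk r p q 4 ⟨x * cEl r 4 ^ (d * (r / 2)), hx'⟩ = Gmk r p q 4 ⟨x, hx⟩ := by
  have h2 : 2 ∣ r := two_dvd_r hr hq hqe
  have hcmem : cEl r 4 ^ (d * (r / 2)) ∈ Grpn r p 4 := c_half_pow_mem_Grpn r p h2 d
  have hprod : Gmk r p q 4 ⟨x * cEl r 4 ^ (d * (r / 2)), hx'⟩
      = Gmk r p q 4 ⟨x, hx⟩ * Gmk r p q 4 ⟨cEl r 4 ^ (d * (r / 2)), hcmem⟩ := by
    rw [← map_mul]
    rfl
  rw [hprod]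
  have hone : Gmk r p q 4 ⟨cEl r 4 ^ (d * (r / 2)), hcmem⟩ = 1 := by
    refine (QuotientGroup.eq_one_iff _).mpr ?_
    show cEl r 4 ^ (d * (r / 2)) ∈ CsubQ r q 4
    exact c_half_pow_mem_CsubQ r q hr hq hqe d
  rw [hone, mul_one]

variable (hr : 0 < r) (hp : p ∣ r) (hq : q ∣ r) (hdvd : p * q ∣ 4 * r)
  (hqe : Even q) (hcond : Odd (r / p) → Even (r / q) ∧ Odd (4 * r / (p * q)))

include hr hp hq hdvd hqe hcond in
lemma Traw_Traw_inr (σ : Equiv.Perm (Fin 4)) (heps : epsP σ = 1) :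
    Traw r p q (Traw r p q (inr σ)) = inr σ * cEl r 4 ^ (2 * Ee r p q) := by
  have h2 : 2 ∣ r := two_dvd_r hr hq hqe
  have h1 : (Traw r p q (inr σ)).right = σ := by rw [Traw_right, right_inr]
  have hA : Avec r σ + Avec r σ = 0 := by
    funext j
    show Avec r σ j + Avec r σ j = (0 : Fin 4 → ZMod r) j
    rw [Pi.zero_apply]
    show ((bitsA σ j : ℕ) : ZMod r) * ((r / 2 : ℕ) : ZMod r)
        + ((bitsA σ j : ℕ) : ZMod r) * ((r / 2 : ℕ) : ZMod r) = 0
    rw [← mul_add, half_cast_mul_two h2, mul_zero]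
  show inl (ofAdd (Avec r (Traw r p q (inr σ)).right)) * (Traw r p q (inr σ))
      * cEl r 4 ^ (Ee r p q * epsP (Traw r p q (inr σ)).right)
    = inr σ * cEl r 4 ^ (2 * Ee r p q)
  rw [h1, Traw_inr]
  simp only [← mul_assoc]
  rw [inl_ofAdd_mul, hA, ofAdd_zero, map_one, one_mul, mul_assoc, ← pow_add]
  congr 2
  rw [heps]
  ring

include hr hp hq hdvd hqe hcond in
lemma phi0_sq_gen (σ : Equiv.Perm (Fin 4)) (heps : epsP σ = 1)
    (hmem : (inr σ : GG r 4) ∈ Grpn r p 4) :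
    phi0 r p q hr hp hq hdvd hqe hcond
        (phi0 r p q hr hp hq hdvd hqe hcond (Gmk r p q 4 ⟨inr σ, hmem⟩))
      = Gmk r p q 4 ⟨inr σ, hmem⟩ := by
  have hT1 : Traw r p q (inr σ) ∈ Grpn r p 4 :=
    Traw_mem r p q hr hp hq hdvd hqe hcond _ hmem
  have hT2 : Traw r p q (Traw r p q (inr σ)) ∈ Grpn r p 4 :=
    Traw_mem r p q hr hp hq hdvd hqe hcond _ hT1
  rw [phi0_mk r p q hr hp hq hdvd hqe hcond ⟨inr σ, hmem⟩ hT1]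
  rw [phi0_mk r p q hr hp hq hdvd hqe hcond ⟨Traw r p q (inr σ), hT1⟩ hT2]
  have hsq := Traw_Traw_inr r p q hr hp hq hdvd hqe hcond σ heps
  have hcmem : cEl r 4 ^ (2 * Ee r p q) ∈ Grpn r p 4 :=
    c2E_mem_Grpn r p q hr hp hq hdvd hqe hcond
  have hprod : Gmk r p q 4 ⟨Traw r p q (Traw r p q (inr σ)), hT2⟩
      = Gmk r p q 4 ⟨inr σ, hmem⟩ * Gmk r p q 4 ⟨cEl r 4 ^ (2 * Ee r p q), hcmem⟩ := by
    rw [← map_mul]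
    congr 1
    exact Subtype.ext hsq
  rw [hprod]
  have hone : Gmk r p q 4 ⟨cEl r 4 ^ (2 * Ee r p q), hcmem⟩ = 1 := by
    refine (QuotientGroup.eq_one_iff _).mpr ?_
    show cEl r 4 ^ (2 * Ee r p q) ∈ CsubQ r q 4
    exact c2E_mem_CsubQ r p q hr hp hq hdvd hqe hcond
  rw [hone, mul_one]

end ValSec

/-! ### Decidable facts about the three simple reflections -/

lemma bits01 : ∀ j, (bitsA (Equiv.swap (0 : Fin 4) 1) j
    + (if j = (2 : Fin 4) then 1 else 0)) % 2 = 0 := by decide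

lemma bits12 : ∀ j, (bitsA (Equiv.swap (1 : Fin 4) 2) j
    + (if j = (3 : Fin 4) then 1 else 0)) % 2 = 0 := by decide

lemma bits23 : ∀ j, (bitsA (Equiv.swap (2 : Fin 4) 3) j
    + (if j = (0 : Fin 4) then 1 else 0)) % 2 = 1 := by decide

lemma eps01 : epsP (Equiv.swap (0 : Fin 4) 1) = 1 := by decide
lemma eps12 : epsP (Equiv.swap (1 : Fin 4) 2) = 1 := by decide
lemma eps23 : epsP (Equiv.swap (2 : Fin 4) 3) = 1 := by decide
section FinalVal
variable (r p q : ℕ) (hr : 0 < r) (hp : p ∣ r) (hq : q ∣ r) (hdvd : p * q ∣ 4 * r)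
  (hqe : Even q) (hcond : Odd (r / p) → Even (r / q) ∧ Odd (4 * r / (p * q)))

include hr hp hq hdvd hqe hcond in
lemma phi0_swEl_val (a b idx : Fin 4) (d : ℕ)
    (hbits : ∀ j, (bitsA (Equiv.swap a b) j + (if j = idx then 1 else 0)) % 2 = d)
    (heps : epsP (Equiv.swap a b) = 1) :
    (Even (r / p) → phi0 r p q hr hp hq hdvd hqe hcond (toGpq r p q 4 (swEl r 4 a b))
        = toGpq r p q 4 (tEl r 4 idx * swEl r 4 a b)) ∧
    (Odd (r / p) → phi0 r p q hr hp hq hdvd hqe hcond (toGpq r p q 4 (swEl r 4 a b))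
        = toGpq r p q 4 (tEl r 4 idx * swEl r 4 a b * cEl r 4 ^ (r / (2 * q)))) := by
  have h2 : 2 ∣ r := two_dvd_r hr hq hqe
  have hmemS : swEl r 4 a b ∈ Grpn r p 4 := inr_mem_Grpn r p _
  have hT1 : Traw r p q (swEl r 4 a b) ∈ Grpn r p 4 :=
    Traw_mem r p q hr hp hq hdvd hqe hcond _ hmemS
  have hkey := Traw_swap r p q h2 a b idx d hbits
  constructor
  · intro hev
    have hkey' : Traw r p q (swEl r 4 a b)
        = tEl r 4 idx * swEl r 4 a b * cEl r 4 ^ (d * (r / 2)) := by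
      rw [hkey, Ee, if_pos hev, zero_mul, pow_zero, mul_one]
    have hX : tEl r 4 idx * swEl r 4 a b * cEl r 4 ^ (d * (r / 2)) ∈ Grpn r p 4 :=
      hkey' ▸ hT1
    have hmemT : tEl r 4 idx * swEl r 4 a b ∈ Grpn r p 4 := by
      have hc := c_half_pow_mem_Grpn r p h2 d
      have h3 := mul_mem hX (inv_mem hc)
      rwa [mul_inv_cancel_right] at h3
    rw [toGpq_eq r p q _ hmemS, toGpq_eq r p q _ hmemT,
      phi0_mk r p q hr hp hq hdvd hqe hcond ⟨swEl r 4 a b, hmemS⟩ hT1]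
    have e1 : (⟨Traw r p q (swEl r 4 a b), hT1⟩ : ↥(Grpn r p 4))
        = ⟨tEl r 4 idx * swEl r 4 a b * cEl r 4 ^ (d * (r / 2)), hX⟩ := Subtype.ext hkey'
    rw [e1, Gmk_mul_chalf r p q hr hq hqe _ hmemT d hX]
  · intro hodd
    have hnotev : ¬ Even (r / p) := by rwa [Nat.not_even_iff_odd]
    have hkey' : Traw r p q (swEl r 4 a b)
        = tEl r 4 idx * swEl r 4 a b * cEl r 4 ^ (r / (2 * q))
            * cEl r 4 ^ (d * (r / 2)) := by
      rw [hkey, Ee, if_neg hnotev, heps, mul_one]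
      rw [mul_assoc (tEl r 4 idx * swEl r 4 a b), ← pow_add,
        Nat.add_comm (d * (r / 2)) (r / (2 * q)), pow_add, ← mul_assoc]
    have hX : tEl r 4 idx * swEl r 4 a b * cEl r 4 ^ (r / (2 * q))
        * cEl r 4 ^ (d * (r / 2)) ∈ Grpn r p 4 := hkey' ▸ hT1
    have hmemT : tEl r 4 idx * swEl r 4 a b * cEl r 4 ^ (r / (2 * q)) ∈ Grpn r p 4 := by
      have hc := c_half_pow_mem_Grpn r p h2 d
      have h3 := mul_mem hX (inv_mem hc)
      rwa [mul_inv_cancel_right] at h3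
    rw [toGpq_eq r p q _ hmemS, toGpq_eq r p q _ hmemT,
      phi0_mk r p q hr hp hq hdvd hqe hcond ⟨swEl r 4 a b, hmemS⟩ hT1]
    have e1 : (⟨Traw r p q (swEl r 4 a b), hT1⟩ : ↥(Grpn r p 4))
        = ⟨tEl r 4 idx * swEl r 4 a b * cEl r 4 ^ (r / (2 * q))
            * cEl r 4 ^ (d * (r / 2)), hX⟩ := Subtype.ext hkey'
    rw [e1, Gmk_mul_chalf r p q hr hq hqe _ hmemT d hX]

end FinalVal

/-- Under the stated hypotheses there is a unique automorphism `φ`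
of `G(r,p,q,4)` fixing `N(r,p,q,4)` pointwise with `φ(s_i) = t_{i+2}·s_i` (if `r/p`
is even) resp. `φ(s_i) = t_{i+2}·s_i·c^{r/(2q)}` (if `r/p` is odd), indices mod 4. -/
theorem exceptional_automorphism_Gpq4
    (r p q : ℕ) (hr : 0 < r) (hp : p ∣ r) (hq : q ∣ r) (hdvd : p * q ∣ 4 * r)
    (hqe : Even q) (hcond : Odd (r / p) → Even (r / q) ∧ Odd (4 * r / (p * q))) :
    ∃! φ : MulAut (Gpq r p q 4),
      (∀ x ∈ Nsub r p q 4, φ x = x) ∧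
      ∀ (i : ℕ) (h1 : i + 1 < 4),
        (Even (r / p) →
          φ (toGpq r p q 4 (swEl r 4 ⟨i, by omega⟩ ⟨i + 1, h1⟩)) =
            toGpq r p q 4
              (tEl r 4 ⟨(i + 2) % 4, by omega⟩ * swEl r 4 ⟨i, by omega⟩ ⟨i + 1, h1⟩)) ∧
        (Odd (r / p) →
          φ (toGpq r p q 4 (swEl r 4 ⟨i, by omega⟩ ⟨i + 1, h1⟩)) =
            toGpq r p q 4
              (tEl r 4 ⟨(i + 2) % 4, by omega⟩ * swEl r 4 ⟨i, by omega⟩ ⟨i + 1, h1⟩ *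
                cEl r 4 ^ (r / (2 * q)))) := by
    classical
  set f : Gpq r p q 4 →* Gpq r p q 4 := phi0 r p q hr hp hq hdvd hqe hcond with hfdef
  have hInv : ∀ x, f (f x) = x := by
    refine gen_induction r p q (fun x => f (f x) = x) ?_ ?_ ?_ ?_
    · intro x y hx hy; rw [map_mul, map_mul, hx, hy]
    · intro x hx; rw [map_inv, map_inv, hx]
    · intro x hx
      show f (f x) = x
      rw [hfdef]
      rw [phi0_fix_N r p q hr hp hq hdvd hqe hcond x hx,
        phi0_fix_N r p q hr hp hq hdvd hqe hcond x hx]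
    · intro π hπ hmem
      have hπ' : π = Equiv.swap 0 1 ∨ π = Equiv.swap 1 2 ∨ π = Equiv.swap 2 3 := by
        simpa using hπ
      have heps : epsP π = 1 := by
        rcases hπ' with rfl | rfl | rfl
        · exact eps01
        · exact eps12
        · exact eps23
      show f (f _) = _
      rw [hfdef]
      exact phi0_sq_gen r p q hr hp hq hdvd hqe hcond π heps hmem
  have hVal : ∀ (i : ℕ) (h1 : i + 1 < 4),
      (Even (r / p) →
        f (toGpq r p q 4 (swEl r 4 ⟨i, by omega⟩ ⟨i + 1, h1⟩)) =
          toGpq r p q 4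
            (tEl r 4 ⟨(i + 2) % 4, by omega⟩ * swEl r 4 ⟨i, by omega⟩ ⟨i + 1, h1⟩)) ∧
      (Odd (r / p) →
        f (toGpq r p q 4 (swEl r 4 ⟨i, by omega⟩ ⟨i + 1, h1⟩)) =
          toGpq r p q 4
            (tEl r 4 ⟨(i + 2) % 4, by omega⟩ * swEl r 4 ⟨i, by omega⟩ ⟨i + 1, h1⟩ *
              cEl r 4 ^ (r / (2 * q)))) := by
    intro i h1
    have hi2 : i ≤ 2 := by omega
    interval_cases i
    · exact phi0_swEl_val r p q hr hp hq hdvd hqe hcond _ _ _ 0 bits01 eps01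
    · exact phi0_swEl_val r p q hr hp hq hdvd hqe hcond _ _ _ 0 bits12 eps12
    · exact phi0_swEl_val r p q hr hp hq hdvd hqe hcond _ _ _ 1 bits23 eps23
  set Φ : MulAut (Gpq r p q 4) := ⟨⟨f, f, hInv, hInv⟩, map_mul f⟩ with hΦ
  refine ⟨Φ, ⟨?_, ?_⟩, ?_⟩
  · intro x hx
    exact phi0_fix_N r p q hr hp hq hdvd hqe hcond x hx
  · intro i h1
    exact hVal i h1
  · rintro ψ ⟨hψN, hψS⟩
    refine MulEquiv.ext ?_
    refine gen_induction r p q (fun x => ψ x = Φ x) ?_ ?_ ?_ ?_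
    · intro x y hx hy; rw [map_mul, map_mul, hx, hy]
    · intro x hx; rw [map_inv, map_inv, hx]
    · intro x hx
      rw [hψN x hx]
      exact (phi0_fix_N r p q hr hp hq hdvd hqe hcond x hx).symm
    · intro π hπ hmem
      have hπ' : π = Equiv.swap 0 1 ∨ π = Equiv.swap 1 2 ∨ π = Equiv.swap 2 3 := by
        simpa using hπ
      rcases hπ' with rfl | rfl | rfl
      · have hx0 : Gmk r p q 4 ⟨inr (Equiv.swap 0 1), hmem⟩
            = toGpq r p q 4 (swEl r 4 ⟨0, by omega⟩ ⟨0 + 1, by omega⟩) := by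
          rw [toGpq_eq r p q (swEl r 4 ⟨0, by omega⟩ ⟨0 + 1, by omega⟩)
            (show swEl r 4 ⟨0, by omega⟩ ⟨0 + 1, by omega⟩ ∈ Grpn r p 4 from
              inr_mem_Grpn r p _)]
          rfl
        rw [hx0]
        rcases Nat.even_or_odd (r / p) with hev | hodd
        · rw [(hψS 0 (by omega)).1 hev]
          exact ((hVal 0 (by omega)).1 hev).symm
        · rw [(hψS 0 (by omega)).2 hodd]
          exact ((hVal 0 (by omega)).2 hodd).symm
      · have hx0 : Gmk r p q 4 ⟨inr (Equiv.swap 1 2), hmem⟩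
            = toGpq r p q 4 (swEl r 4 ⟨1, by omega⟩ ⟨1 + 1, by omega⟩) := by
          rw [toGpq_eq r p q (swEl r 4 ⟨1, by omega⟩ ⟨1 + 1, by omega⟩)
            (show swEl r 4 ⟨1, by omega⟩ ⟨1 + 1, by omega⟩ ∈ Grpn r p 4 from
              inr_mem_Grpn r p _)]
          rfl
        rw [hx0]
        rcases Nat.even_or_odd (r / p) with hev | hodd
        · rw [(hψS 1 (by omega)).1 hev]
          exact ((hVal 1 (by omega)).1 hev).symm
        · rw [(hψS 1 (by omega)).2 hodd]
          exact ((hVal 1 (by omega)).2 hodd).symm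
      · have hx0 : Gmk r p q 4 ⟨inr (Equiv.swap 2 3), hmem⟩
            = toGpq r p q 4 (swEl r 4 ⟨2, by omega⟩ ⟨2 + 1, by omega⟩) := by
          rw [toGpq_eq r p q (swEl r 4 ⟨2, by omega⟩ ⟨2 + 1, by omega⟩)
            (show swEl r 4 ⟨2, by omega⟩ ⟨2 + 1, by omega⟩ ∈ Grpn r p 4 from
              inr_mem_Grpn r p _)]
          rfl
        rw [hx0]
        rcases Nat.even_or_odd (r / p) with hev | hodd
        · rw [(hψS 2 (by omega)).1 hev]
          exact ((hVal 2 (by omega)).1 hev).symm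
        · rw [(hψS 2 (by omega)).2 hodd]
          exact ((hVal 2 (by omega)).2 hodd).symm
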